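/- Let A be a distributive nearlattice and a, a₀, …, a_n ∈ A. Then a belongs to the filter generated by {a₀,…,a_n} if and only if a = m^n(a₀,…,a_n,a). -/

import Mathlib

variable {A : Type*}

/-- Induced join: `x ∨ y := m x x y`. -/
def sup (m : A → A → A → A) (x y : A) : A := m x x y

/-- Induced order: `x ≤ y` iff `m x x y = y`. -/
def le (m : A → A → A → A) (x y : A) : Prop := m x x y = y

/-- Nearlattice identities (P1) and (P2). -/
def IsNearlattice (m : A → A → A → A) : Prop :=
  (∀ x y, m x y x = x) ∧
  (∀ x y z u w, m (m x y z) (m y (m u x z) z) w = m w w (m y (m x u z) z))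

/-- Identity (P3). -/
def P3 (m : A → A → A → A) : Prop :=
  ∀ x y z w, m x (m y y z) w = m (m x y w) (m x y w) (m x z w)

/-- Identity (P4). -/
def P4 (m : A → A → A → A) : Prop :=
  ∀ x y z w, m x x (m y z w) = m (m x x y) (m x x z) w

/-- Distributive nearlattice: (P1)-(P3). -/
def IsDN (m : A → A → A → A) : Prop := IsNearlattice m ∧ P3 m

/-- `z` is the meet (greatest lower bound) of `x` and `y` in `A`. -/
def IsMeet (m : A → A → A → A) (x y z : A) : Prop :=
  le m z x ∧ le m z y ∧ ∀ w, le m w x → le m w y → le m w z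

/-- `z` is the meet of `x` and `y` computed inside the principal upset `[a)`. -/
def IsMeetIn (m : A → A → A → A) (a x y z : A) : Prop :=
  le m a z ∧ le m z x ∧ le m z y ∧
    ∀ w, le m a w → le m w x → le m w y → le m w z

/-- `a` is the greatest lower bound of the set `s`. -/
def IsInfSet (m : A → A → A → A) (s : Set A) (a : A) : Prop :=
  (∀ b ∈ s, le m a b) ∧ ∀ c, (∀ b ∈ s, le m c b) → le m c a

/-- A filter of a nearlattice: a nonempty up-set closed under existing binary meets. -/
def IsFilter (m : A → A → A → A) (F : Set A) : Prop :=
  F.Nonempty ∧ (∀ x y, x ∈ F → le m x y → y ∈ F) ∧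
    (∀ x y z, x ∈ F → y ∈ F → IsMeet m x y z → z ∈ F)

/-- `mN m [a₀,…,aₙ] b = mⁿ(a₀,…,aₙ,b)`, with `mN m [] b = b`. -/
def mN (m : A → A → A → A) : List A → A → A
  | [], b => b
  | a :: t, b => t.foldl (fun acc x => m acc x b) (m a a b)

namespace DN10

variable {m : A → A → A → A}

theorem p1 (hd : IsDN m) : ∀ x y, m x y x = x := hd.1.1

theorem p2 (hd : IsDN m) : ∀ x y z u w,
    m (m x y z) (m y (m u x z) z) w = m w w (m y (m x u z) z) := hd.1.2

theorem p3' (hd : IsDN m) : ∀ x y z w,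
    m x (m y y z) w = m (m x y w) (m x y w) (m x z w) := hd.2

theorem comm (hd : IsDN m) (x w : A) : m x x w = m w w x := by
  have h := p2 hd x x x x w
  simp only [p1 hd] at h
  exact h

theorem sa (hd : IsDN m) (x y : A) : m x x (m y x x) = x := by
  have h := p2 hd x y x x x
  simp only [p1 hd] at h
  exact h.symm

theorem d2 (hd : IsDN m) (x z : A) : m x z z = z := by
  have hsb := p2 hd x z z x (m x z z)
  simp only [p1 hd] at hsb
  calc m x z z = m (m x z z) (m x z z) z := hsb
    _ = m z z (m x z z) := comm hd _ _
    _ = z := sa hd z x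

theorem e23 (hd : IsDN m) (x y z w : A) : m (m x y z) z w = m w w z := by
  have h := p2 hd x y z z w
  simp only [p1 hd, d2 hd] at h
  exact h

theorem d4 (hd : IsDN m) (x y z : A) : m z z (m x y z) = m x y z := by
  have h := e23 hd x y z (m x y z)
  rw [p1 hd] at h
  rw [comm hd (m x y z) z] at h
  exact h.symm

theorem e18 (hd : IsDN m) (x y z : A) : m x (m y y z) z = m x y z := by
  calc m x (m y y z) z = m (m x y z) (m x y z) (m x z z) := p3' hd x y z z
    _ = m (m x y z) (m x y z) z := by rw [d2 hd]
    _ = m z z (m x y z) := comm hd _ _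
    _ = m x y z := d4 hd _ _ _

theorem c2 (hd : IsDN m) (x y z : A) : m x y z = m y x z := by
  have key : ∀ a b : A, m a b z = m (m a b z) (m a b z) (m b a z) := by
    intro a b
    have h := p2 hd a b z a (m a b z)
    rw [p1 hd] at h
    rw [e18 hd] at h
    exact h
  calc m x y z = m (m x y z) (m x y z) (m y x z) := key x y
    _ = m (m y x z) (m y x z) (m x y z) := comm hd _ _
    _ = m y x z := (key y x).symm

theorem e21 (hd : IsDN m) {q w : A} (hq : m q q w = w) (a : A) : m a q w = w := by
  have h : m a q w = m a (m q q w) w := (e18 hd a q w).symm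
  rw [hq] at h
  rw [d2 hd] at h
  exact h

theorem ub1 (hd : IsDN m) (x y : A) : m x x (m x x y) = m x x y := by
  rw [comm hd x y]; exact d4 hd y y x

theorem lub (hd : IsDN m) {x y w : A} (hx : m x x w = w) (hy : m y y w = w) :
    m (m x x y) (m x x y) w = w := by
  have h := p3' hd (m x x y) x y w
  rw [e21 hd hx, e21 hd hy] at h
  rw [p1 hd] at h
  exact h

theorem trans (hd : IsDN m) {x y z : A} (hxy : m x x y = y) (hyz : m y y z = z) :
    m x x z = z := by
  have s1 : m x y z = z := by
    have h := (e18 hd x y z).symm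
    rw [hyz] at h
    rw [d2 hd] at h
    exact h
  have h := p3' hd x x y z
  rw [hxy, s1] at h
  rw [comm hd (m x x z) z] at h
  rw [d4 hd] at h
  exact h.symm

theorem antisym (hd : IsDN m) {x y : A} (hxy : m x x y = y) (hyx : m y y x = x) : x = y := by
  calc x = m y y x := hyx.symm
    _ = m x x y := (comm hd x y).symm
    _ = y := hxy

theorem m2 (hd : IsDN m) (x y z : A) : m (m x y z) (m x y z) (m x x z) = m x x z := by
  calc m (m x y z) (m x y z) (m x x z) = m x (m y y x) z := (p3' hd x y x z).symm
    _ = m (m y y x) x z := c2 hd _ _ _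
    _ = m z z x := e23 hd y y x z
    _ = m x x z := comm hd z x

theorem m3 (hd : IsDN m) (x y z : A) : m (m x y z) (m x y z) (m y y z) = m y y z := by
  rw [c2 hd x y z]; exact m2 hd y x z

theorem mono2 (hd : IsDN m) {w y z : A} (hw : m w w (m y y z) = m y y z) (x : A) :
    m (m x w z) (m x w z) (m x y z) = m x y z := by
  have h := p3' hd x w (m y y z) z
  rw [hw, e18 hd] at h
  exact h.symm

theorem mono1 (hd : IsDN m) {w x z : A} (hw : m w w (m x x z) = m x x z) (y : A) :
    m (m w y z) (m w y z) (m x y z) = m x y z := by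
  rw [c2 hd w y z, c2 hd x y z]; exact mono2 hd hw y

theorem m4 (hd : IsDN m) {w x y z : A} (hzw : m z z w = w)
    (hx : m w w (m x x z) = m x x z) (hy : m w w (m y y z) = m y y z) :
    m w w (m x y z) = m x y z := by
  have a1 : m w w z = w := by rw [comm hd w z]; exact hzw
  have a2 : m w w (m x w z) = m x w z := by
    have h := mono1 hd hx w
    rw [a1] at h
    exact h
  exact trans hd a2 (mono2 hd hy x)

theorem meet_of_ge (hd : IsDN m) {u v z : A} (hu : m z z u = u) (hv : m z z v = v) :
    IsMeet m u v (m u v z) := by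
  have hu' : m u u z = u := by rw [comm hd u z]; exact hu
  have hv' : m v v z = v := by rw [comm hd v z]; exact hv
  refine ⟨?_, ?_, ?_⟩
  · show m (m u v z) (m u v z) u = u
    have h := m2 hd u v z
    rw [hu'] at h
    exact h
  · show m (m u v z) (m u v z) v = v
    have h := m3 hd u v z
    rw [hv'] at h
    exact h
  · intro w hwu hwv
    have hwu : m w w u = u := hwu
    have hwv : m w w v = v := hwv
    have hzw' : m z z (m z z w) = m z z w := ub1 hd z w
    have hww' : m w w (m z z w) = m z z w := d4 hd z z w
    have hw'u : m (m z z w) (m z z w) u = u := lub hd hu hwu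
    have hw'v : m (m z z w) (m z z w) v = v := lub hd hv hwv
    have hx4 : m (m z z w) (m z z w) (m u u z) = m u u z := by rw [hu']; exact hw'u
    have hy4 : m (m z z w) (m z z w) (m v v z) = m v v z := by rw [hv']; exact hw'v
    show m w w (m u v z) = m u v z
    exact trans hd hww' (m4 hd hzw' hx4 hy4)

theorem sup_mono_l (hd : IsDN m) {a b : A} (hab : m a a b = b) (w : A) :
    m (m a a w) (m a a w) (m b b w) = m b b w :=
  lub hd (trans hd hab (ub1 hd b w)) (d4 hd b b w)

theorem sup_mono_r (hd : IsDN m) {b c : A} (hbc : m b b c = c) (w : A) :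
    m (m w w b) (m w w b) (m w w c) = m w w c :=
  lub hd (ub1 hd w c) (trans hd hbc (d4 hd w w c))

theorem assoc (hd : IsDN m) (x y z : A) :
    m (m x x y) (m x x y) z = m x x (m y y z) := by
  apply antisym hd
  · exact lub hd (lub hd (ub1 hd x (m y y z))
      (trans hd (ub1 hd y z) (d4 hd x x (m y y z))))
      (trans hd (d4 hd y y z) (d4 hd x x (m y y z)))
  · exact lub hd (trans hd (ub1 hd x y) (ub1 hd (m x x y) z))
      (lub hd (trans hd (d4 hd x x y) (ub1 hd (m x x y) z))
        (d4 hd (m x x y) (m x x y) z))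

theorem absorb2 (hd : IsDN m) (x y w : A) : m (m x x y) x w = m x x w := by
  apply antisym hd
  · exact m3 hd (m x x y) x w
  · exact m4 hd (d4 hd x x w) (sup_mono_l hd (ub1 hd x y) w) (p1 hd (m x x w) (m x x w))

theorem scomm3 (hd : IsDN m) (w c b : A) :
    m (m w w c) (m w w c) b = m c c (m w w b) := by
  calc m (m w w c) (m w w c) b = m (m c c w) (m c c w) b := by rw [comm hd w c]
    _ = m c c (m w w b) := assoc hd c w b

theorem p4 (hd : IsDN m) (x y z w : A) :
    m x x (m y z w) = m (m x x y) (m x x z) w := by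
  have hBA : m (m z x w) (m z x w) (m x x w) = m x x w := m3 hd z x w
  have step2 : m (m x x w) (m x x w) (m z x w) = m x x w := by
    rw [comm hd (m x x w) (m z x w)]; exact hBA
  have h : m (m x x y) (m x x z) w = m x x (m y z w) := by
    calc m (m x x y) (m x x z) w
        = m (m (m x x y) x w) (m (m x x y) x w) (m (m x x y) z w) := p3' hd (m x x y) x z w
      _ = m (m x x w) (m x x w) (m (m x x y) z w) := by rw [absorb2 hd]
      _ = m (m x x w) (m x x w) (m z (m x x y) w) := by rw [c2 hd (m x x y) z w]
      _ = m (m x x w) (m x x w) (m (m z x w) (m z x w) (m z y w)) := by rw [p3' hd z x y w]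
      _ = m (m (m x x w) (m x x w) (m z x w)) (m (m x x w) (m x x w) (m z x w))
            (m z y w) := (assoc hd (m x x w) (m z x w) (m z y w)).symm
      _ = m (m x x w) (m x x w) (m z y w) := by rw [step2]
      _ = m x x (m w w (m z y w)) := assoc hd x w (m z y w)
      _ = m x x (m z y w) := by rw [d4 hd z y w]
      _ = m x x (m y z w) := by rw [c2 hd z y w]
  exact h.symm

theorem base_irrel (hd : IsDN m) {u v z z' : A}
    (h1 : m z z u = u) (h1' : m z z v = v) (h2 : m z' z' u = u) (h2' : m z' z' v = v) :
    m u v z = m u v z' := by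
  have M := meet_of_ge hd h1 h1'
  have M' := meet_of_ge hd h2 h2'
  exact antisym hd (M'.2.2 _ M.1 M.2.1) (M.2.2 _ M'.1 M'.2.1)

theorem jdbin (hd : IsDN m) {b acc : A} (hba : m b b acc = acc) (w c : A) :
    m w w (m acc c b) = m (m w w acc) c (m w w b) := by
  have f1 : m b b (m w w acc) = m w w acc := trans hd hba (d4 hd w w acc)
  have f3 : m (m w w b) (m w w b) (m w w acc) = m w w acc := sup_mono_r hd hba w
  have f4 : m b b (m c c (m w w b)) = m c c (m w w b) :=
    trans hd (d4 hd w w b) (d4 hd c c (m w w b))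
  have f5 : m (m w w b) (m w w b) (m c c (m w w b)) = m c c (m w w b) :=
    d4 hd c c (m w w b)
  calc m w w (m acc c b) = m (m w w acc) (m w w c) b := p4 hd w acc c b
    _ = m (m w w acc) (m (m w w c) (m w w c) b) b := (e18 hd (m w w acc) (m w w c) b).symm
    _ = m (m w w acc) (m c c (m w w b)) b := by rw [scomm3 hd w c b]
    _ = m (m w w acc) (m c c (m w w b)) (m w w b) := base_irrel hd f1 f4 f3 f5
    _ = m (m w w acc) c (m w w b) := e18 hd (m w w acc) c (m w w b)


theorem jd_fold (hd : IsDN m) (w b : A) : ∀ (t : List A) (acc : A), m b b acc = acc →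
    m w w (List.foldl (fun acc x => m acc x b) acc t) =
      List.foldl (fun acc x => m acc x (m w w b)) (m w w acc) t := by
  intro t
  induction t with
  | nil => intro acc _; rfl
  | cons c t ih =>
    intro acc hba
    simp only [List.foldl_cons]
    rw [ih (m acc c b) (d4 hd acc c b)]
    rw [jdbin hd hba w c]

theorem jd (hd : IsDN m) (a : A) (t : List A) (w b : A) :
    m w w (mN m (a :: t) b) = mN m (a :: t) (m w w b) := by
  simp only [mN]
  rw [jd_fold hd w b t (m a a b) (d4 hd a a b)]
  congr 1
  calc m w w (m a a b) = m (m w w a) (m w w a) b := (assoc hd w a b).symm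
    _ = m a a (m w w b) := scomm3 hd w a b

theorem inf_fold (hd : IsDN m) (b : A) : ∀ (t : List A) (acc : A), m b b acc = acc →
    (m b b (List.foldl (fun acc x => m acc x b) acc t)
        = List.foldl (fun acc x => m acc x b) acc t)
    ∧ (m (List.foldl (fun acc x => m acc x b) acc t)
        (List.foldl (fun acc x => m acc x b) acc t) acc = acc)
    ∧ (∀ c ∈ t, m (List.foldl (fun acc x => m acc x b) acc t)
        (List.foldl (fun acc x => m acc x b) acc t) (m c c b) = m c c b)
    ∧ (∀ w, m b b w = w → m w w acc = acc → (∀ c ∈ t, m w w (m c c b) = m c c b) →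
        m w w (List.foldl (fun acc x => m acc x b) acc t)
          = List.foldl (fun acc x => m acc x b) acc t) := by
  intro t
  induction t with
  | nil =>
    intro acc hba
    exact ⟨hba, p1 hd acc acc, fun c hc => absurd hc List.not_mem_nil,
      fun w _ hwacc _ => hwacc⟩
  | cons c t ih =>
    intro acc hba
    have haccb : m acc acc b = acc := by rw [comm hd acc b]; exact hba
    obtain ⟨i1, i2, i3, i4⟩ := ih (m acc c b) (d4 hd acc c b)
    have hacc'acc : m (m acc c b) (m acc c b) acc = acc := by
      have hh := m2 hd acc c b
      rw [haccb] at hh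
      exact hh
    simp only [List.foldl_cons]
    refine ⟨i1, trans hd i2 hacc'acc, ?_, ?_⟩
    · intro c' hc'
      rcases List.mem_cons.mp hc' with hh | hh
      · subst hh
        exact trans hd i2 (m3 hd acc c' b)
      · exact i3 c' hh
    · intro w hbw hwacc hws
      refine i4 w hbw ?_ (fun c' hc' => hws c' (List.mem_cons_of_mem c hc'))
      exact m4 hd hbw (by rw [haccb]; exact hwacc) (hws c (List.mem_cons_self))

theorem inf1 (hd : IsDN m) (a : A) (t : List A) (b : A) :
    m b b (mN m (a :: t) b) = mN m (a :: t) b := by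
  simp only [mN]
  exact (inf_fold hd b t (m a a b) (d4 hd a a b)).1

theorem mem_self (hd : IsDN m) (a : A) (t : List A) {x : A} (hx : x ∈ a :: t) :
    x = mN m (a :: t) x := by
  obtain ⟨i1, i2, i3, i4⟩ := inf_fold hd x t (m a a x) (d4 hd a a x)
  simp only [mN]
  apply antisym hd i1
  rcases List.mem_cons.mp hx with hh | hh
  · rw [hh] at i2 ⊢
    rw [p1 hd] at i2 ⊢
    exact i2
  · have h3 := i3 x hh
    rw [p1 hd] at h3
    exact h3

end DN10

theorem stmt10 (m : A → A → A → A) (h : IsDN m) (l : List A) (hl : l ≠ [])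
    (a : A) :
    (∀ F : Set A, IsFilter m F → (∀ x ∈ l, x ∈ F) → a ∈ F) ↔ a = mN m l a := by
  cases l with
  | nil => exact absurd rfl hl
  | cons a0 t =>
    constructor
    · intro H
      refine H {x | x = mN m (a0 :: t) x}
        ⟨⟨a0, DN10.mem_self h a0 t (List.mem_cons_self)⟩, ?_, ?_⟩
        (fun x hx => DN10.mem_self h a0 t hx)
      · intro x y hx hxy
        have hxy' : m x x y = y := hxy
        have hyx : m y y x = y := by rw [DN10.comm h y x]; exact hxy'
        show y = mN m (a0 :: t) y
        calc y = m y y x := hyx.symm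
          _ = m y y (mN m (a0 :: t) x) := congrArg (m y y) hx
          _ = mN m (a0 :: t) (m y y x) := DN10.jd h a0 t y x
          _ = mN m (a0 :: t) y := congrArg (mN m (a0 :: t)) hyx
      · intro x y z hx hy M
        have key : ∀ u : A, u = mN m (a0 :: t) u → m z z u = u →
            m (mN m (a0 :: t) z) (mN m (a0 :: t) z) u = u := by
          intro u hu hzu
          have c1 : m u u z = u := by rw [DN10.comm h u z]; exact hzu
          calc m (mN m (a0 :: t) z) (mN m (a0 :: t) z) u
              = m u u (mN m (a0 :: t) z) := DN10.comm h _ _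
            _ = mN m (a0 :: t) (m u u z) := DN10.jd h a0 t u z
            _ = mN m (a0 :: t) u := congrArg _ c1
            _ = u := hu.symm
        exact DN10.antisym h (DN10.inf1 h a0 t z)
          (M.2.2 (mN m (a0 :: t) z) (key x hx M.1) (key y hy M.2.1))
    · intro ha F hF hlF
      have hfold : ∀ (t' : List A) (acc : A), acc ∈ F → m a a acc = acc →
          (∀ c ∈ t', c ∈ F) → List.foldl (fun acc x => m acc x a) acc t' ∈ F := by
        intro t'
        induction t' with
        | nil => intro acc hacc _ _; exact hacc
        | cons c t' ih =>
          intro acc hacc hba hcF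
          simp only [List.foldl_cons]
          refine ih (m acc c a) ?_ (DN10.d4 h acc c a)
            (fun c' hc' => hcF c' (List.mem_cons_of_mem c hc'))
          have hSca : m c c a ∈ F :=
            hF.2.1 c (m c c a) (hcF c (List.mem_cons_self)) (DN10.ub1 h c a)
          have M := DN10.meet_of_ge h hba (DN10.d4 h c c a)
          rw [DN10.e18 h acc c a] at M
          exact hF.2.2 acc (m c c a) (m acc c a) hacc hSca M
      have h0 : m a0 a0 a ∈ F :=
        hF.2.1 a0 (m a0 a0 a) (hlF a0 (List.mem_cons_self)) (DN10.ub1 h a0 a)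
      have hmem : mN m (a0 :: t) a ∈ F := by
        simp only [mN]
        exact hfold t (m a0 a0 a) h0 (DN10.d4 h a0 a0 a)
          (fun c hc => hlF c (List.mem_cons_of_mem a0 hc))
      rwa [← ha] at hmem
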